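/- Let α, μ be real numbers with 0 ≤ α ≤ 1, 0 ≤ μ < 1 and α + μ ≤ 1. Then for every λ > 0 and every t > 0, ∫₀ᵗ s^{-μ} λ^α e^{-(t-s)λ} ds ≤ t^{1-α-μ} (1-μ)^{α-1}. -/

import Mathlib

open MeasureTheory

/-- Weighted AM-GM consequence: for `0 < α < 1` and `w ∈ [0,1]`,
`w (1-w)^{α/(1-α)} ≤ (1-α) α^{α/(1-α)}`. -/
lemma amgm_aux_lemma512 {α w : ℝ} (hα : 0 < α) (hα1 : α < 1) (hw : 0 ≤ w) (hw1 : w ≤ 1) :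
    w * (1 - w) ^ (α / (1 - α)) ≤ (1 - α) * α ^ (α / (1 - α)) := by
  have h1α : 0 < 1 - α := by linarith
  have hw' : (0:ℝ) ≤ 1 - w := by linarith
  have key : (1 - w) ^ α * w ^ (1 - α) ≤ α ^ α * (1 - α) ^ (1 - α) := by
    have h := Real.geom_mean_le_arith_mean2_weighted hα.le h1α.le
      (div_nonneg hw' hα.le) (div_nonneg hw h1α.le) (by ring)
    have hr : α * ((1 - w) / α) + (1 - α) * (w / (1 - α)) = 1 := by
      field_simp
      ring
    rw [hr, Real.div_rpow hw' hα.le, Real.div_rpow hw h1α.le, div_mul_div_comm,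
      div_le_one (by positivity)] at h
    linarith
  have key2 := Real.rpow_le_rpow (by positivity) key (by positivity : (0:ℝ) ≤ 1 / (1 - α))
  rw [Real.mul_rpow (by positivity) (by positivity),
    Real.mul_rpow (by positivity) (by positivity),
    ← Real.rpow_mul hw', ← Real.rpow_mul hw, ← Real.rpow_mul hα.le,
    ← Real.rpow_mul h1α.le] at key2
  simp only [mul_one_div, div_self h1α.ne', Real.rpow_one] at key2
  calc w * (1 - w) ^ (α / (1 - α)) = (1 - w) ^ (α / (1 - α)) * w := by ring
    _ ≤ α ^ (α / (1 - α)) * (1 - α) := key2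
    _ = (1 - α) * α ^ (α / (1 - α)) := by ring

/-- The scalar inequality `1 - e^{-x} ≤ α^α x^{1-α}` for `α ∈ [0,1]`, `x ≥ 0`. -/
lemma one_sub_exp_le_lemma512 {α x : ℝ} (h0 : 0 ≤ α) (h1 : α ≤ 1) (hx : 0 ≤ x) :
    1 - Real.exp (-x) ≤ α ^ α * x ^ (1 - α) := by
  rcases eq_or_lt_of_le h0 with h|hα
  · rw [← h]
    rw [Real.rpow_zero, sub_zero, Real.rpow_one, one_mul]
    have := Real.add_one_le_exp (-x)
    linarith
  rcases eq_or_lt_of_le h1 with h|hα1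
  · rw [h]
    rw [sub_self, Real.rpow_zero, Real.rpow_one, mul_one]
    have := Real.exp_pos (-x)
    linarith
  -- now 0 < α < 1
  have h1α : 0 < 1 - α := by linarith
  set β := α / (1 - α) with hβ
  have hβpos : 0 < β := by positivity
  set p := 1 / (1 - α) with hp
  have hppos : 0 < p := by positivity
  have hp1 : p - 1 = β := by
    rw [hp, hβ]; field_simp; ring
  -- the function g
  set g : ℝ → ℝ := fun y => α ^ β * y - (1 - Real.exp (-y)) ^ p with hg
  have hbase : ∀ y : ℝ, 0 < y → 0 < 1 - Real.exp (-y) := by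
    intro y hy
    have : Real.exp (-y) < 1 := by
      rw [Real.exp_lt_one_iff]; linarith
    linarith
  have hderiv : ∀ y : ℝ, 0 < y →
      HasDerivAt g (α ^ β - Real.exp (-y) * p * (1 - Real.exp (-y)) ^ (p - 1)) y := by
    intro y hy
    have h1 : HasDerivAt (fun y : ℝ => 1 - Real.exp (-y)) (Real.exp (-y)) y := by
      have hneg : HasDerivAt (fun y : ℝ => -y) (-1) y := (hasDerivAt_id y).neg
      have := (Real.hasDerivAt_exp (-y)).comp y hneg
      have h2 := (hasDerivAt_const y (1:ℝ)).sub this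
      exact h2.congr_deriv (by ring)
    have h2 := h1.rpow_const (p := p) (Or.inl (hbase y hy).ne')
    have h3 : HasDerivAt (fun y : ℝ => α ^ β * y) (α ^ β) y := by
      simpa using (hasDerivAt_id y).const_mul (α ^ β)
    exact h3.sub h2
  have hcont : Continuous g := by
    apply Continuous.sub (continuous_const.mul continuous_id)
    exact (Real.continuous_rpow_const hppos.le).comp
      (continuous_const.sub (Real.continuous_exp.comp continuous_neg))
  have hmono : MonotoneOn g (Set.Ici 0) := by
    apply monotoneOn_of_deriv_nonneg (convex_Ici 0) hcont.continuousOn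
    · intro y hy
      rw [interior_Ici] at hy
      exact ((hderiv y hy).differentiableAt).differentiableWithinAt
    · intro y hy
      rw [interior_Ici] at hy
      rw [(hderiv y hy).deriv]
      have hy' : (0:ℝ) < y := hy
      have hw : 0 ≤ Real.exp (-y) := (Real.exp_pos _).le
      have hw1 : Real.exp (-y) ≤ 1 := by
        rw [Real.exp_le_one_iff]; linarith
      have := amgm_aux_lemma512 hα hα1 hw hw1
      rw [hp1]
      have hαβ : 0 < α ^ β := Real.rpow_pos_of_pos hα _
      rw [hp]
      rw [sub_nonneg]
      calc Real.exp (-y) * (1 / (1 - α)) * (1 - Real.exp (-y)) ^ β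
          = (Real.exp (-y) * (1 - Real.exp (-y)) ^ β) / (1 - α) := by ring
        _ ≤ ((1 - α) * α ^ β) / (1 - α) := by gcongr
        _ = α ^ β := by field_simp
  -- conclude
  have hg0 : g 0 = 0 := by
    simp [hg, Real.exp_zero, Real.zero_rpow hppos.ne']
  have hgx : 0 ≤ g x := by
    have := hmono (Set.self_mem_Ici) (Set.mem_Ici.2 hx) hx
    rwa [hg0] at this
  have hkey : (1 - Real.exp (-x)) ^ p ≤ α ^ β * x := by
    rw [hg] at hgx; simp only at hgx; linarith
  have hbx : 0 ≤ 1 - Real.exp (-x) := by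
    have : Real.exp (-x) ≤ 1 := by rw [Real.exp_le_one_iff]; linarith
    linarith
  have := Real.rpow_le_rpow (by positivity) hkey h1α.le
  rw [← Real.rpow_mul hbx, hp, one_div, inv_mul_cancel₀ h1α.ne', Real.rpow_one,
    Real.mul_rpow (by positivity) hx, ← Real.rpow_mul hα.le, hβ,
    div_mul_cancel₀ _ h1α.ne'] at this
  exact this

/-- Key scalar estimate in the proof of Lemma 5.12: for `0 ≤ α ≤ 1`, `0 ≤ μ < 1`, `α + μ ≤ 1`,
`λ > 0` and `t > 0`, `∫₀ᵗ s^{-μ} λ^α e^{-(t-s)λ} ds ≤ t^{1-α-μ} (1-μ)^{α-1}`. -/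
theorem scalar_estimate_lemma512 (α μ : ℝ) (hα0 : 0 ≤ α) (hα1 : α ≤ 1)
    (hμ0 : 0 ≤ μ) (hμ1 : μ < 1) (hαμ : α + μ ≤ 1)
    (lam t : ℝ) (hlam : 0 < lam) (ht : 0 < t) :
    ∫ s in Set.Ioo (0:ℝ) t, s ^ (-μ) * lam ^ α * Real.exp (-(t - s) * lam) ≤
      t ^ (1 - α - μ) * (1 - μ) ^ (α - 1) := by
  have h1μ : 0 < 1 - μ := by linarith
  set T : ℝ := t ^ (1 - μ) with hT
  set c : ℝ := t ^ μ * lam with hc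
  have hTpos : 0 < T := Real.rpow_pos_of_pos ht _
  have hcpos : 0 < c := mul_pos (Real.rpow_pos_of_pos ht _) hlam
  have htT : t ^ μ * T = t := by
    rw [hT, ← Real.rpow_add ht]; norm_num
  set f2 : ℝ → ℝ := fun s => s ^ (-μ) * Real.exp (-(c * (T - s ^ (1 - μ)))) with hf2
  -- basic integrability of s ^ (-μ) on Ioc 0 t
  have int_rpow : IntegrableOn (fun s : ℝ => s ^ (-μ)) (Set.Ioc 0 t) := by
    have h := intervalIntegral.intervalIntegrable_rpow' (a := 0) (b := t)
      (show (-1:ℝ) < -μ by linarith)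
    rwa [intervalIntegrable_iff_integrableOn_Ioc_of_le ht.le] at h
  -- exponent sign facts on Ioc
  have hexp_arg : ∀ s ∈ Set.Ioc (0:ℝ) t, -(c * (T - s ^ (1 - μ))) ≤ 0 := by
    intro s hs
    have h1 : s ^ (1 - μ) ≤ T := by
      rw [hT]; exact Real.rpow_le_rpow hs.1.le hs.2 h1μ.le
    have : 0 ≤ c * (T - s ^ (1 - μ)) := mul_nonneg hcpos.le (by linarith)
    linarith
  -- integrability of f2 on Ioc 0 t
  have meas2 : AEStronglyMeasurable f2 (volume.restrict (Set.Ioc 0 t)) := by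
    apply ContinuousOn.aestronglyMeasurable _ measurableSet_Ioc
    intro s hs
    apply ContinuousWithinAt.mul
    · exact (Real.continuousAt_rpow_const s (-μ) (Or.inl hs.1.ne')).continuousWithinAt
    · apply Continuous.continuousWithinAt
      apply Real.continuous_exp.comp
      exact (continuous_const.mul
        (continuous_const.sub (Real.continuous_rpow_const h1μ.le))).neg
  have intf2 : IntegrableOn f2 (Set.Ioc 0 t) := by
    apply Integrable.mono' int_rpow meas2
    filter_upwards [ae_restrict_mem measurableSet_Ioc] with s hs
    have hs0 : 0 < s := hs.1
    have hnn : 0 ≤ f2 s := by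
      apply mul_nonneg (Real.rpow_nonneg hs0.le _) (Real.exp_pos _).le
    rw [Real.norm_eq_abs, abs_of_nonneg hnn, hf2]
    calc s ^ (-μ) * Real.exp (-(c * (T - s ^ (1 - μ))))
        ≤ s ^ (-μ) * 1 := by
          apply mul_le_mul_of_nonneg_left _ (Real.rpow_nonneg hs0.le _)
          rw [Real.exp_le_one_iff]
          exact hexp_arg s hs
      _ = s ^ (-μ) := mul_one _
  -- integrability of the original integrand on Ioo 0 t
  set f1 : ℝ → ℝ := fun s => s ^ (-μ) * lam ^ α * Real.exp (-(t - s) * lam) with hf1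
  have meas1 : AEStronglyMeasurable f1 (volume.restrict (Set.Ioc 0 t)) := by
    apply ContinuousOn.aestronglyMeasurable _ measurableSet_Ioc
    intro s hs
    apply ContinuousWithinAt.mul
    · apply ContinuousWithinAt.mul
      · exact (Real.continuousAt_rpow_const s (-μ) (Or.inl hs.1.ne')).continuousWithinAt
      · exact continuousWithinAt_const
    · apply Continuous.continuousWithinAt
      exact Real.continuous_exp.comp (((continuous_const.sub continuous_id).neg).mul
        continuous_const)
  have intf1 : IntegrableOn f1 (Set.Ioc 0 t) := by
    apply Integrable.mono' (int_rpow.const_mul (lam ^ α)) meas1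
    filter_upwards [ae_restrict_mem measurableSet_Ioc] with s hs
    have hs0 : 0 < s := hs.1
    have hnn : 0 ≤ f1 s :=
      mul_nonneg (mul_nonneg (Real.rpow_nonneg hs0.le _) (Real.rpow_nonneg hlam.le _))
        (Real.exp_pos _).le
    rw [Real.norm_eq_abs, abs_of_nonneg hnn, hf1]
    calc s ^ (-μ) * lam ^ α * Real.exp (-(t - s) * lam)
        ≤ s ^ (-μ) * lam ^ α * 1 := by
          apply mul_le_mul_of_nonneg_left _
            (mul_nonneg (Real.rpow_nonneg hs0.le _) (Real.rpow_nonneg hlam.le _))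
          rw [Real.exp_le_one_iff]
          have : 0 ≤ (t - s) * lam := mul_nonneg (by linarith [hs.2]) hlam.le
          linarith
      _ = lam ^ α * s ^ (-μ) := by ring
  -- step 1: pointwise comparison on Ioo 0 t
  have step1 : ∫ s in Set.Ioo (0:ℝ) t, f1 s ≤ ∫ s in Set.Ioo (0:ℝ) t, lam ^ α * f2 s := by
    have i1 : IntegrableOn f1 (Set.Ioo 0 t) := intf1.mono_set Set.Ioo_subset_Ioc_self
    have i2 : IntegrableOn (fun s => lam ^ α * f2 s) (Set.Ioc 0 t) := intf2.const_mul _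
    apply setIntegral_mono_on i1 (i2.mono_set Set.Ioo_subset_Ioc_self) measurableSet_Ioo
    intro s hs
    have hs0 : 0 < s := hs.1
    have hst : s < t := hs.2
    have hkey : s ≤ t ^ μ * s ^ (1 - μ) := by
      have h1 : s ^ μ ≤ t ^ μ := Real.rpow_le_rpow hs0.le hst.le hμ0
      have h2 : s ^ μ * s ^ (1 - μ) = s := by
        rw [← Real.rpow_add hs0]; norm_num
      nlinarith [Real.rpow_nonneg hs0.le (1 - μ)]
    have hexp : Real.exp (-(t - s) * lam) ≤ Real.exp (-(c * (T - s ^ (1 - μ)))) := by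
      rw [Real.exp_le_exp]
      have : c * (T - s ^ (1 - μ)) = lam * (t - t ^ μ * s ^ (1 - μ)) := by
        rw [hc]; rw [mul_comm (t ^ μ) lam, mul_assoc, mul_sub, htT]
      nlinarith [this, hlam.le]
    have hnn : 0 ≤ s ^ (-μ) * lam ^ α :=
      mul_nonneg (Real.rpow_nonneg hs0.le _) (Real.rpow_nonneg hlam.le _)
    calc f1 s = (s ^ (-μ) * lam ^ α) * Real.exp (-(t - s) * lam) := by rw [hf1]
      _ ≤ (s ^ (-μ) * lam ^ α) * Real.exp (-(c * (T - s ^ (1 - μ)))) :=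
          mul_le_mul_of_nonneg_left hexp hnn
      _ = lam ^ α * f2 s := by rw [hf2]; ring
  -- step 2: compute the integral of f2
  set φ : ℝ → ℝ := fun s => Real.exp (-(c * (T - s ^ (1 - μ)))) / (c * (1 - μ)) with hφ
  have hφcont : Continuous φ := by
    apply Continuous.div_const
    apply Real.continuous_exp.comp
    exact (continuous_const.mul (continuous_const.sub (Real.continuous_rpow_const h1μ.le))).neg
  have hφderiv : ∀ s ∈ Set.Ioo (0:ℝ) t, HasDerivAt φ (f2 s) s := by
    intro s hs
    have hs0 : 0 < s := hs.1
    have hd1 : HasDerivAt (fun s : ℝ => s ^ (1 - μ)) ((1 - μ) * s ^ (1 - μ - 1)) s :=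
      Real.hasDerivAt_rpow_const (Or.inl hs0.ne')
    have hd2 : HasDerivAt (fun s : ℝ => -(c * (T - s ^ (1 - μ))))
        (c * ((1 - μ) * s ^ (1 - μ - 1))) s := by
      have := (((hasDerivAt_const s T).sub hd1).const_mul c).neg
      exact this.congr_deriv (by ring)
    have hd3 := (Real.hasDerivAt_exp _).comp s hd2
    have hd4 := hd3.div_const (c * (1 - μ))
    have hval : Real.exp (-(c * (T - s ^ (1 - μ)))) * (c * ((1 - μ) * s ^ (1 - μ - 1))) /
        (c * (1 - μ)) = f2 s := by
      rw [hf2, show (1 - μ - 1 : ℝ) = -μ by ring]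
      field_simp
    rw [← hval]
    exact hd4
  have step2 : ∫ s in Set.Ioo (0:ℝ) t, f2 s = (1 - Real.exp (-(c * T))) / (c * (1 - μ)) := by
    have h1 : ∫ s in Set.Ioo (0:ℝ) t, f2 s = ∫ s in (0:ℝ)..t, f2 s := by
      rw [intervalIntegral.integral_of_le ht.le, integral_Ioc_eq_integral_Ioo]
    rw [h1]
    have h2 := intervalIntegral.integral_eq_sub_of_hasDeriv_right_of_le ht.le
      (hφcont.continuousOn) (fun s hs => (hφderiv s hs).hasDerivWithinAt)
      ((intervalIntegrable_iff_integrableOn_Ioc_of_le ht.le).2 intf2)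
    rw [h2, hφ]
    have hφt : Real.exp (-(c * (T - t ^ (1 - μ)))) = 1 := by
      rw [hT]; simp
    have hφ0 : (0:ℝ) ^ (1 - μ) = 0 := Real.zero_rpow h1μ.ne'
    simp only [hφ0, sub_zero, hφt]
    rw [div_sub_div_same]
  -- assemble
  have step3 : ∫ s in Set.Ioo (0:ℝ) t, lam ^ α * f2 s
      = lam ^ α * ((1 - Real.exp (-(c * T))) / (c * (1 - μ))) := by
    rw [integral_const_mul, step2]
  have hcT : c * T = t * lam := by
    rw [hc, mul_comm (t ^ μ) lam, mul_assoc, htT, mul_comm]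
  have hscalar : 1 - Real.exp (-(t * lam)) ≤ α ^ α * (t * lam) ^ (1 - α) :=
    one_sub_exp_le_lemma512 hα0 hα1 (by positivity)
  have step4 : lam ^ α * ((1 - Real.exp (-(c * T))) / (c * (1 - μ)))
      ≤ lam ^ α * ((α ^ α * (t * lam) ^ (1 - α)) / (c * (1 - μ))) := by
    apply mul_le_mul_of_nonneg_left _ (Real.rpow_nonneg hlam.le _)
    rw [hcT]
    gcongr
  have step5 : lam ^ α * ((α ^ α * (t * lam) ^ (1 - α)) / (c * (1 - μ)))
      ≤ t ^ (1 - α - μ) * (1 - μ) ^ (α - 1) := by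
    have hmul : (t * lam) ^ (1 - α) = t ^ (1 - α) * lam ^ (1 - α) :=
      Real.mul_rpow ht.le hlam.le
    have hlam1 : lam ^ α * lam ^ (1 - α) = lam := by
      rw [← Real.rpow_add hlam]; norm_num
    have htdiv : t ^ (1 - α) / t ^ μ = t ^ (1 - α - μ) := by
      rw [← Real.rpow_sub ht]
    have hle : α ^ α ≤ (1 - μ) ^ α := Real.rpow_le_rpow hα0 (by linarith) hα0
    have hfinal : (1 - μ) ^ (α - 1) = (1 - μ) ^ α / (1 - μ) := by
      rw [Real.rpow_sub h1μ, Real.rpow_one]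
    have heq : lam ^ α * ((α ^ α * (t * lam) ^ (1 - α)) / (c * (1 - μ)))
        = α ^ α / (1 - μ) * t ^ (1 - α - μ) := by
      rw [hmul, hc, ← htdiv]
      field_simp
      linear_combination (α ^ α) * hlam1
    rw [heq]
    calc α ^ α / (1 - μ) * t ^ (1 - α - μ)
        ≤ (1 - μ) ^ α / (1 - μ) * t ^ (1 - α - μ) := by
          gcongr
      _ = t ^ (1 - α - μ) * (1 - μ) ^ (α - 1) := by rw [hfinal]; ring
  calc ∫ s in Set.Ioo (0:ℝ) t, s ^ (-μ) * lam ^ α * Real.exp (-(t - s) * lam)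
      = ∫ s in Set.Ioo (0:ℝ) t, f1 s := rfl
    _ ≤ ∫ s in Set.Ioo (0:ℝ) t, lam ^ α * f2 s := step1
    _ = lam ^ α * ((1 - Real.exp (-(c * T))) / (c * (1 - μ))) := step3
    _ ≤ lam ^ α * ((α ^ α * (t * lam) ^ (1 - α)) / (c * (1 - μ))) := step4
    _ ≤ t ^ (1 - α - μ) * (1 - μ) ^ (α - 1) := step5
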